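/- arXiv:2107.04300 — 6 statements merged into one kernel-verified Lean document; each statement's English description precedes it below -/
import Mathlib

section
/- Let α ∈ ℝ^m with α₁ > α₂ > ... > α_m. Then the permutahedron over α (the convex hull of all m! coordinate permutations of α) equals the set of x ∈ ℝ^m such that ∑ᵢ xᵢ = ∑ᵢ αᵢ and for every nonempty proper subset S of {1,...,m}, ∑_{c∈S} x_c ≥ ∑_{i=1}^{|S|} α_{m-i+1}. -/
open Finset

lemma card_filter_ge (m k : ℕ) :
    (Finset.univ.filter (fun i : Fin m => k ≤ i.val)).card = m - k := by
  rw [← Finset.card_image_of_injective _ Fin.val_injective]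
  have : (Finset.univ.filter (fun i : Fin m => k ≤ i.val)).image Fin.val = Finset.Ico k m := by
    ext a
    simp only [Finset.mem_image, Finset.mem_filter, Finset.mem_univ, true_and, Finset.mem_Ico]
    constructor
    · rintro ⟨i, hi, rfl⟩; exact ⟨hi, i.isLt⟩
    · rintro ⟨h1, h2⟩; exact ⟨⟨a, h2⟩, h1, rfl⟩
  rw [this, Nat.card_Ico]

lemma strictMono_le {k m : ℕ} {f : Fin k → Fin m} (hf : StrictMono f) (j : Fin k) :
    (f j).val ≤ m - k + j.val := by
  have key : ∀ (i : ℕ) (h : j.val + i < k), (f j).val + i ≤ (f ⟨j.val + i, h⟩).val := by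
    intro i
    induction i with
    | zero => intro h; simp
    | succ n ih =>
      intro h
      have h' : j.val + n < k := by omega
      have h1 := ih h'
      have h2 : (f ⟨j.val + n, h'⟩).val < (f ⟨j.val + n + 1, by omega⟩).val :=
        hf (by simp [Fin.lt_def])
      have : j.val + (n + 1) = j.val + n + 1 := by omega
      simp only [this]
      omega
  have hk : j.val < k := j.isLt
  have := key (k - 1 - j.val) (by omega)
  have hm := (f ⟨j.val + (k - 1 - j.val), by omega⟩).isLt
  omega

lemma sum_smallest_le {m : ℕ} (α : Fin m → ℝ)
    (hmono : ∀ i j : Fin m, i ≤ j → α j ≤ α i) (T : Finset (Fin m)) :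
    ∑ i ∈ Finset.univ.filter (fun i : Fin m => m - T.card ≤ i.val), α i ≤ ∑ i ∈ T, α i := by
  set k := T.card with hk
  have hkm : k ≤ m := by simpa using Finset.card_le_card (Finset.subset_univ T)
  have hT : T.card = k := rfl
  have hTimage : T = Finset.univ.image (T.orderEmbOfFin hT) := by
    apply Finset.coe_injective
    rw [Finset.coe_image, Finset.coe_univ, Set.image_univ, Finset.range_orderEmbOfFin]
  set g : Fin k → Fin m := fun j => ⟨m - k + j.val, by omega⟩ with hg
  have hginj : Function.Injective g := by
    intro a b hab
    have := congrArg Fin.val hab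
    simp only [hg] at this
    exact Fin.ext (by omega)
  have hBimage : Finset.univ.filter (fun i : Fin m => m - k ≤ i.val)
      = Finset.univ.image g := by
    ext i
    simp only [Finset.mem_filter, Finset.mem_univ, true_and, Finset.mem_image, hg]
    constructor
    · intro hi
      exact ⟨⟨i.val - (m - k), by omega⟩, Fin.ext (by simp; omega)⟩
    · rintro ⟨j, rfl⟩; simp
  rw [hTimage, hBimage, Finset.sum_image (fun a _ b _ h => (T.orderEmbOfFin hT).injective h),
    Finset.sum_image (fun a _ b _ h => hginj h)]
  apply Finset.sum_le_sum
  intro j _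
  apply hmono
  have := strictMono_le (T.orderEmbOfFin hT).strictMono j
  simp only [Fin.le_def, hg]
  omega

lemma abel_nonneg (m : ℕ) (d e : ℕ → ℝ) (hd : ∀ k, d k ≤ d (k + 1))
    (h0 : ∑ j ∈ Finset.range m, e j = 0)
    (ht : ∀ k, 1 ≤ k → k < m → 0 ≤ ∑ j ∈ Finset.Ico k m, e j) :
    0 ≤ ∑ j ∈ Finset.range m, d j * e j := by
  have hdmono : Monotone d := monotone_nat_of_le_succ hd
  set δ : ℕ → ℝ := fun k => if k = 0 then 0 else d k - d (k - 1) with hδ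
  have hδnn : ∀ k, 0 ≤ δ k := by
    intro k
    by_cases h : k = 0
    · simp [hδ, h]
    · simp only [hδ, if_neg h]
      have : d (k - 1) ≤ d k := hdmono (by omega)
      linarith
  have hdj : ∀ j, d j = d 0 + ∑ k ∈ Finset.range (j + 1), δ k := by
    intro j
    induction j with
    | zero => simp [hδ]
    | succ n ih =>
      rw [Finset.sum_range_succ, ← add_assoc, ← ih]
      simp only [hδ, if_neg (Nat.succ_ne_zero n)]
      simp
  calc (0:ℝ) ≤ ∑ k ∈ Finset.Ico 0 m, δ k * ∑ j ∈ Finset.Ico k m, e j := by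
        apply Finset.sum_nonneg
        intro k hk
        by_cases h : k = 0
        · simp [hδ, h]
        · exact mul_nonneg (hδnn k) (ht k (by omega) (Finset.mem_Ico.mp hk).2)
    _ = ∑ k ∈ Finset.Ico 0 m, ∑ j ∈ Finset.Ico k m, δ k * e j := by
        simp_rw [Finset.mul_sum]
    _ = ∑ j ∈ Finset.Ico 0 m, ∑ k ∈ Finset.Ico 0 (j + 1), δ k * e j :=
        Finset.sum_Ico_Ico_comm 0 m _
    _ = ∑ j ∈ Finset.range m, (∑ k ∈ Finset.range (j + 1), δ k) * e j := by
        rw [Finset.range_eq_Ico]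
        refine Finset.sum_congr rfl fun j _ => ?_
        rw [← Finset.range_eq_Ico, Finset.sum_mul]
    _ = ∑ j ∈ Finset.range m, (d j - d 0) * e j := by
        refine Finset.sum_congr rfl fun j _ => ?_
        rw [hdj j]; ring_nf
    _ = ∑ j ∈ Finset.range m, d j * e j - d 0 * ∑ j ∈ Finset.range m, e j := by
        rw [Finset.mul_sum, ← Finset.sum_sub_distrib]
        exact Finset.sum_congr rfl fun j _ => by ring
    _ = ∑ j ∈ Finset.range m, d j * e j := by rw [h0]; ring

lemma sum_Ico_eq_sum_filter {m : ℕ} (k : ℕ) (G : Fin m → ℝ) :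
    ∑ j ∈ Finset.Ico k m, (if h : j < m then G ⟨j, h⟩ else 0)
      = ∑ j ∈ Finset.univ.filter (fun j : Fin m => k ≤ j.val), G j := by
  refine Finset.sum_bij' (fun a ha => (⟨a, (Finset.mem_Ico.mp ha).2⟩ : Fin m))
    (fun b _ => b.val) ?_ ?_ ?_ ?_ ?_
  · intro a ha
    simp only [Finset.mem_filter, Finset.mem_univ, true_and]
    exact (Finset.mem_Ico.mp ha).1
  · intro b hb
    simp only [Finset.mem_filter, Finset.mem_univ, true_and] at hb
    exact Finset.mem_Ico.mpr ⟨hb, b.isLt⟩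
  · intro a ha; rfl
  · intro b hb; rfl
  · intro a ha
    rw [dif_pos (Finset.mem_Ico.mp ha).2]

/-- The permutahedron over a vector `p ∈ ℝ^m`: the convex hull of all
coordinate permutations of `p`, where a permutation `π` acts by
`(π(p))ᵢ = p (π i)`. -/
noncomputable def permutahedron (m : ℕ) (p : Fin m → ℝ) : Set (Fin m → ℝ) :=
  convexHull ℝ {x | ∃ π : Equiv.Perm (Fin m), x = p ∘ π}

/-- Rado's theorem: for `α₁ > α₂ > ⋯ > α_m`, the permutahedron over `α` is the
set of `x` with `∑ xᵢ = ∑ αᵢ` and, for every nonempty proper subset `S`,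
`∑_{c ∈ S} x_c` at least the sum of the `|S|` smallest coordinates of `α`. -/
theorem rado (m : ℕ) (α : Fin m → ℝ)
    (hdec : ∀ i j : Fin m, i < j → α j < α i) :
    permutahedron m α =
      {x : Fin m → ℝ |
        (∑ i, x i = ∑ i, α i) ∧
        ∀ S : Finset (Fin m), S.Nonempty → S ≠ Finset.univ →
          ∑ c ∈ S, x c ≥
            ∑ i ∈ Finset.univ.filter (fun i : Fin m => m - S.card ≤ i.val), α i} := by
  have hmono : ∀ i j : Fin m, i ≤ j → α j ≤ α i := by
    intro i j h
    rcases h.lt_or_eq with h | h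
    · exact (hdec i j h).le
    · rw [h]
  set RHS : Set (Fin m → ℝ) :=
      {x : Fin m → ℝ |
        (∑ i, x i = ∑ i, α i) ∧
        ∀ S : Finset (Fin m), S.Nonempty → S ≠ Finset.univ →
          ∑ c ∈ S, x c ≥
            ∑ i ∈ Finset.univ.filter (fun i : Fin m => m - S.card ≤ i.val), α i} with hRHS
  apply Set.Subset.antisymm
  · -- permutahedron ⊆ RHS
    apply convexHull_min
    · rintro y ⟨π, rfl⟩
      constructor
      · exact Equiv.sum_comp π α
      · intro S _ _
        have himg : ∑ c ∈ S, (α ∘ π) c = ∑ i ∈ S.image π, α i :=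
          (Finset.sum_image (fun a _ b _ h => π.injective h)).symm
        have hcard : (S.image π).card = S.card :=
          Finset.card_image_of_injective S π.injective
        rw [himg]
        have := sum_smallest_le α hmono (S.image π)
        rw [hcard] at this
        exact this
    · -- RHS is convex
      intro x hx y hy a b ha hb hab
      constructor
      · have : ∑ i, (a • x + b • y) i = a * ∑ i, x i + b * ∑ i, y i := by
          simp only [Pi.add_apply, Pi.smul_apply, smul_eq_mul]
          rw [Finset.sum_add_distrib, Finset.mul_sum, Finset.mul_sum]
        rw [this, hx.1, hy.1, ← add_mul, hab, one_mul]
      · intro S hS hS'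
        have h1 := hx.2 S hS hS'
        have h2 := hy.2 S hS hS'
        have : ∑ c ∈ S, (a • x + b • y) c = a * ∑ c ∈ S, x c + b * ∑ c ∈ S, y c := by
          simp only [Pi.add_apply, Pi.smul_apply, smul_eq_mul]
          rw [Finset.sum_add_distrib, Finset.mul_sum, Finset.mul_sum]
        rw [this]
        have e1 := mul_le_mul_of_nonneg_left h1 ha
        have e2 := mul_le_mul_of_nonneg_left h2 hb
        have e3 : a * (∑ i ∈ Finset.univ.filter (fun i : Fin m => m - S.card ≤ i.val), α i)
            + b * (∑ i ∈ Finset.univ.filter (fun i : Fin m => m - S.card ≤ i.val), α i)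
            = ∑ i ∈ Finset.univ.filter (fun i : Fin m => m - S.card ≤ i.val), α i := by
          rw [← add_mul, hab, one_mul]
        linarith
  · -- RHS ⊆ permutahedron
    intro x hx
    rcases Nat.eq_zero_or_pos m with hm | hm
    · subst hm
      have hxα : x = α ∘ (Equiv.refl (Fin 0)) := by funext i; exact i.elim0
      exact subset_convexHull ℝ _ ⟨Equiv.refl _, hxα⟩
    by_contra hxP
    set V : Set (Fin m → ℝ) := {y | ∃ π : Equiv.Perm (Fin m), y = α ∘ π} with hV
    have hVfin : V.Finite := by
      apply (Set.finite_range fun π : Equiv.Perm (Fin m) => α ∘ π).subset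
      rintro y ⟨π, rfl⟩
      exact ⟨π, rfl⟩
    obtain ⟨f, u, hxu, hub⟩ :=
      geometric_hahn_banach_point_closed (convex_convexHull ℝ V) (hVfin.isClosed_convexHull (𝕜 := ℝ)) hxP
    set c : Fin m → ℝ := fun i => f (fun j => if i = j then (1:ℝ) else 0) with hc
    have hf : ∀ y : Fin m → ℝ, f y = ∑ i, y i * c i := by
      intro y
      conv_lhs => rw [pi_eq_sum_univ y]
      rw [map_sum]
      exact Finset.sum_congr rfl fun i _ => by rw [f.map_smul]; simp [smul_eq_mul, hc]
    set τ : Equiv.Perm (Fin m) := Tuple.sort c with hτ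
    have hmonoc : Monotone (c ∘ τ) := Tuple.monotone_sort c
    set d : ℕ → ℝ := fun k => c (τ ⟨min k (m - 1), by omega⟩) with hd
    set G : Fin m → ℝ := fun i => x (τ i) - α i with hG
    set e : ℕ → ℝ := fun j => if h : j < m then G ⟨j, h⟩ else 0 with he
    have hdle : ∀ k, d k ≤ d (k + 1) := by
      intro k
      apply hmonoc
      simp only [Fin.le_def]
      omega
    have h0 : ∑ j ∈ Finset.range m, e j = 0 := by
      rw [Finset.range_eq_Ico, he, sum_Ico_eq_sum_filter 0 G]
      have : Finset.univ.filter (fun j : Fin m => 0 ≤ j.val) = Finset.univ := by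
        ext j; simp
      rw [this]
      simp only [hG]
      rw [Finset.sum_sub_distrib, Equiv.sum_comp τ x, hx.1, sub_self]
    have ht : ∀ k, 1 ≤ k → k < m → 0 ≤ ∑ j ∈ Finset.Ico k m, e j := by
      intro k hk1 hkm
      rw [he, sum_Ico_eq_sum_filter k G]
      set F := Finset.univ.filter (fun j : Fin m => k ≤ j.val) with hF
      have hsum1 : ∑ j ∈ F, x (τ j) = ∑ i ∈ F.image τ, x i :=
        (Finset.sum_image (fun a _ b _ h => τ.injective h)).symm
      set S := F.image τ with hS
      have hScard : S.card = m - k := by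
        rw [hS, Finset.card_image_of_injective _ τ.injective, hF, card_filter_ge]
      have hSne : S.Nonempty := by
        apply Finset.Nonempty.image
        exact ⟨⟨m - 1, by omega⟩, by simp [hF]; omega⟩
      have hSuniv : S ≠ Finset.univ := by
        intro h
        rw [h, Finset.card_univ, Fintype.card_fin] at hScard
        omega
      have hineq := hx.2 S hSne hSuniv
      rw [hScard] at hineq
      have hmk : m - (m - k) = k := by omega
      rw [hmk] at hineq
      simp only [hG]
      rw [Finset.sum_sub_distrib, hsum1]
      rw [← hF] at hineq
      linarith [hineq]
    have habel := abel_nonneg m d e hdle h0 ht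
    have hsum : ∑ j ∈ Finset.range m, d j * e j
        = ∑ j : Fin m, c (τ j) * (x (τ j) - α j) := by
      rw [← Fin.sum_univ_eq_sum_range (fun j => d j * e j) m]
      refine Finset.sum_congr rfl fun j _ => ?_
      have h1 : d j.val = c (τ j) := by
        simp only [hd]
        congr 2
        exact Fin.ext (by simp; omega)
      have h2 : e j.val = x (τ j) - α j := by
        simp only [he, dif_pos j.isLt, hG]
      rw [h1, h2]
    have hfx : f x = ∑ j : Fin m, c (τ j) * x (τ j) := by
      rw [hf x, ← Equiv.sum_comp τ (fun i => x i * c i)]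
      exact Finset.sum_congr rfl fun j _ => by ring
    have hfα : f (α ∘ τ.symm) = ∑ j : Fin m, c (τ j) * α j := by
      rw [hf (α ∘ τ.symm), ← Equiv.sum_comp τ (fun i => (α ∘ τ.symm) i * c i)]
      refine Finset.sum_congr rfl fun j _ => ?_
      simp only [Function.comp_apply, Equiv.symm_apply_apply]
      ring
    have hmem : f x < f (α ∘ τ.symm) := by
      have := hub (α ∘ τ.symm) (subset_convexHull ℝ V ⟨τ.symm, rfl⟩)
      linarith
    rw [hsum] at habel
    have hsplit : ∑ j : Fin m, c (τ j) * (x (τ j) - α j)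
        = ∑ j : Fin m, c (τ j) * x (τ j) - ∑ j : Fin m, c (τ j) * α j := by
      rw [← Finset.sum_sub_distrib]
      exact Finset.sum_congr rfl fun j _ => by ring
    rw [hsplit, ← hfx, ← hfα] at habel
    linarith
end

section
/- Let 0 < ε < 1/3, ρ ≥ ε^k, and x ∈ Π_ε(ρ,k,m). Suppose for distinct coordinates c and c' we have x_c > 2ε·x_{c'}. Then there exists δ > 0 such that x + δ(e_{c'} − e_c) ∈ Π_ε(ρ,k,m), where e_i denotes the i-th standard unit vector. -/
/-- The vector `p_ε(ρ,k,m) ∈ ℝ^m` with first coordinate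
`ρ − (ε^{k+1} + ⋯ + ε^{k+m−1})` and `i`-th coordinate `ε^{k+i−1}` for `i > 1`
(here indexed from `0`). -/
noncomputable def pEps (ρ ε : ℝ) (k m : ℕ) : Fin m → ℝ :=
  fun i => if i.val = 0 then ρ - ∑ j ∈ Finset.range (m - 1), ε ^ (k + 1 + j)
           else ε ^ (k + i.val)

/-- The ε-permutahedron `Π_ε(ρ,k,m)`. -/
noncomputable def PiEps (ρ ε : ℝ) (k m : ℕ) : Set (Fin m → ℝ) :=
  permutahedron m (pEps ρ ε k m)

lemma geomAux (ε : ℝ) (hε0 : 0 ≤ ε) (hε : ε ≤ 1/3) (n : ℕ) :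
    ∑ j ∈ Finset.range n, ε ^ j ≤ 3/2 := by
  induction n with
  | zero => norm_num
  | succ n ih =>
      rw [geom_sum_succ]
      have h0 : 0 ≤ ∑ j ∈ Finset.range n, ε ^ j :=
        Finset.sum_nonneg fun j _ => pow_nonneg hε0 j
      nlinarith

lemma pEps_pos_bound (ρ ε : ℝ) (k m : ℕ) (hε0 : 0 < ε) (hε : ε < 1/3) (hρ : ε ^ k ≤ ρ) :
    ε ^ k / 2 ≤ ρ - ∑ j ∈ Finset.range (m-1), ε ^ (k + 1 + j) := by
  have hk : (0:ℝ) < ε ^ k := pow_pos hε0 k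
  have hS : ∑ j ∈ Finset.range (m-1), ε ^ (k + 1 + j)
      ≤ ε ^ (k+1) * (3/2) := by
    have : ∑ j ∈ Finset.range (m-1), ε ^ (k + 1 + j)
        = ε ^ (k+1) * ∑ j ∈ Finset.range (m-1), ε ^ j := by
      rw [Finset.mul_sum]
      exact Finset.sum_congr rfl fun j _ => by rw [← pow_add]
    rw [this]
    exact mul_le_mul_of_nonneg_left (geomAux ε hε0.le hε.le _) (pow_nonneg hε0.le _)
  have : ε ^ (k+1) = ε ^ k * ε := by ring
  nlinarith [pow_nonneg hε0.le (k+1)]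

lemma pEps_key (ρ ε : ℝ) (k m : ℕ) (hε0 : 0 < ε) (hε : ε < 1/3) (hρ : ε ^ k ≤ ρ)
    (a b : Fin m) (hab : a ≠ b) (h : pEps ρ ε k m a ≤ pEps ρ ε k m b) :
    pEps ρ ε k m a ≤ 2 * ε * pEps ρ ε k m b := by
  have hk : (0:ℝ) < ε ^ k := pow_pos hε0 k
  have h0 := pEps_pos_bound ρ ε k m hε0 hε hρ
  unfold pEps at *
  by_cases ha : a.val = 0 <;> by_cases hb : b.val = 0 <;> simp [ha, hb] at h ⊢
  · exact absurd (Fin.val_injective (ha.trans hb.symm)) hab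
  · -- a = 0, b ≠ 0 : contradiction
    exfalso
    have h1 : ε ^ (k + b.val) ≤ ε ^ (k+1) := by
      apply pow_le_pow_of_le_one hε0.le (by linarith)
      omega
    have : ε ^ (k+1) = ε ^ k * ε := by ring
    nlinarith
  · -- b = 0, a ≠ 0
    have h1 : ε ^ (k + a.val) ≤ ε ^ (k+1) := by
      apply pow_le_pow_of_le_one hε0.le (by linarith)
      omega
    have : ε ^ (k+1) = ε ^ k * ε := by ring
    nlinarith
  · -- both nonzero
    have hba : b.val < a.val := by
      rcases lt_trichotomy a.val b.val with hlt | heq | hgt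
      · exfalso
        have := pow_lt_pow_right_of_lt_one₀ hε0 (by linarith : ε < 1)
          (by omega : k + a.val < k + b.val)
        linarith
      · exact absurd (Fin.val_injective heq) hab
      · exact hgt
    have h1 : ε ^ (k + a.val) ≤ ε ^ (k + b.val + 1) := by
      apply pow_le_pow_of_le_one hε0.le (by linarith)
      omega
    have h2 : ε ^ (k + b.val + 1) = ε * ε ^ (k + b.val) := by ring
    nlinarith [pow_pos hε0 (k + b.val)]

/-- If `x ∈ Π_ε(ρ,k,m)` and `x_c > 2ε·x_{c'}` for distinct `c, c'`, then some
positive mass `δ` can be moved from coordinate `c` to coordinate `c'` while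
staying inside `Π_ε(ρ,k,m)`. -/
theorem move_mass_within_PiEps (ρ ε : ℝ) (k m : ℕ)
    (hε0 : 0 < ε) (hε : ε < 1 / 3) (hρ : ε ^ k ≤ ρ)
    (x : Fin m → ℝ) (hx : x ∈ PiEps ρ ε k m)
    (c c' : Fin m) (hcc' : c ≠ c') (hbig : x c > 2 * ε * x c') :
    ∃ δ : ℝ, 0 < δ ∧
      (fun j => x j + δ * ((Pi.single c' 1 : Fin m → ℝ) j - (Pi.single c 1 : Fin m → ℝ) j))
        ∈ PiEps ρ ε k m := by
  classical
  set p := pEps ρ ε k m with hp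
  have hxrep : x ∈ convexHull ℝ {y : Fin m → ℝ | ∃ π : Equiv.Perm (Fin m), y = p ∘ π} := hx
  rw [convexHull_eq] at hxrep
  obtain ⟨ι, t, w, z, hw0, hw1, hzS, hcm⟩ := hxrep
  -- choose permutations
  have hπ : ∀ i ∈ t, ∃ π : Equiv.Perm (Fin m), z i = p ∘ π := hzS
  choose! π hπ using hπ
  -- the "mass moved" per generator
  set d : ι → ℝ := fun i => if z i c' < z i c then z i c - z i c' else 0 with hd
  set y : ι → Fin m → ℝ := fun i =>
    if z i c' < z i c then p ∘ ((Equiv.swap c c').trans (π i)) else z i with hy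
  set δ : ℝ := ∑ i ∈ t, w i * d i with hδ
  have hd0 : ∀ i, 0 ≤ d i := by
    intro i; rw [hd]; dsimp only; split <;> linarith
  have hdnn : ∀ i ∈ t, 0 ≤ w i * d i := fun i hi => mul_nonneg (hw0 i hi) (hd0 i)
  -- pointwise description of y for i ∈ t
  have hyz : ∀ i ∈ t, ∀ j, y i j = z i j + d i * ((Pi.single c' 1 : Fin m → ℝ) j
      - (Pi.single c 1 : Fin m → ℝ) j) := by
    intro i hi j
    rw [hy, hd]; dsimp only
    split
    · next hlt =>
        have hz := hπ i hi
        by_cases hjc : j = c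
        · subst hjc
          simp only [Function.comp_apply, Equiv.trans_apply, Equiv.swap_apply_left]
          rw [hz]
          simp [Pi.single_apply, hcc', Ne.symm hcc']
        · by_cases hjc' : j = c'
          · subst hjc'
            simp only [Function.comp_apply, Equiv.trans_apply, Equiv.swap_apply_right]
            rw [hz]
            simp [Pi.single_apply, hcc', Ne.symm hcc']
          · simp only [Function.comp_apply, Equiv.trans_apply,
              Equiv.swap_apply_of_ne_of_ne hjc hjc']
            rw [hz]
            simp [Pi.single_apply, hjc, hjc']
    · simp
  -- x values as sums
  have hxval : ∀ j, x j = ∑ i ∈ t, w i * z i j := by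
    intro j
    rw [← hcm, Finset.centerMass_eq_of_sum_1 _ _ hw1]
    simp [Finset.sum_apply]
  -- δ is positive
  have hδpos : 0 < δ := by
    rcases (Finset.sum_nonneg hdnn).lt_or_eq with h | h
    · exact h
    exfalso
    have hzero : ∀ i ∈ t, w i * d i = 0 :=
      (Finset.sum_eq_zero_iff_of_nonneg hdnn).1 h.symm
    have hle : ∀ i ∈ t, w i * z i c ≤ w i * (2 * ε * z i c') := by
      intro i hi
      rcases eq_or_lt_of_le (hw0 i hi) with hw | hw
      · rw [← hw]; simp
      · have hdz : d i = 0 := by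
          have := hzero i hi
          rcases mul_eq_zero.1 this with h' | h'
          · exact absurd h'.symm hw.ne
          · exact h'
        have hzle : z i c ≤ z i c' := by
          by_contra hcon
          push_neg at hcon
          rw [hd] at hdz; dsimp only at hdz
          rw [if_pos hcon] at hdz
          linarith
        have hzi := hπ i hi
        have hne : π i c ≠ π i c' := fun hcon => hcc' ((π i).injective hcon)
        have hkey := pEps_key ρ ε k m hε0 hε hρ (π i c) (π i c') hne
          (by rw [hzi] at hzle; exact hzle)
        have : z i c ≤ 2 * ε * z i c' := by rw [hzi]; exact hkey
        exact mul_le_mul_of_nonneg_left this (hw0 i hi)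
    have : x c ≤ 2 * ε * x c' := by
      rw [hxval c, hxval c']
      calc ∑ i ∈ t, w i * z i c ≤ ∑ i ∈ t, w i * (2 * ε * z i c') :=
            Finset.sum_le_sum hle
        _ = 2 * ε * ∑ i ∈ t, w i * z i c' := by
            rw [Finset.mul_sum]; exact Finset.sum_congr rfl fun i _ => by ring
    linarith
  refine ⟨δ, hδpos, ?_⟩
  have hmem : t.centerMass w y ∈ PiEps ρ ε k m := by
    apply Finset.centerMass_mem_convexHull t hw0 (by rw [hw1]; norm_num)
    intro i hi
    rw [hy]; dsimp only
    split
    · exact ⟨(Equiv.swap c c').trans (π i), rfl⟩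
    · exact hzS i hi
  have heq : (fun j => x j + δ * ((Pi.single c' 1 : Fin m → ℝ) j
      - (Pi.single c 1 : Fin m → ℝ) j)) = t.centerMass w y := by
    funext j
    rw [Finset.centerMass_eq_of_sum_1 _ _ hw1]
    have : (∑ i ∈ t, w i • y i) j = ∑ i ∈ t, w i * y i j := by
      simp [Finset.sum_apply]
    rw [this]
    have : ∑ i ∈ t, w i * y i j
        = ∑ i ∈ t, (w i * z i j + (w i * d i) * ((Pi.single c' 1 : Fin m → ℝ) j
            - (Pi.single c 1 : Fin m → ℝ) j)) := by
      refine Finset.sum_congr rfl fun i hi => ?_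
      rw [hyz i hi j]; ring
    rw [this, Finset.sum_add_distrib, ← Finset.sum_mul, ← hxval j, ← hδ]
  rw [heq]
  exact hmem
end

section
/- Let x ∈ Π_ε(ρ,k,m) with 0 < ε ≤ 1/2 and ρ > max(ε^k, 2m·ε^{k+1}). Let c be a coordinate with x_c ≥ x_{c'} for all c'. Then x − δ·e_c ∈ Π_ε(ρ−δ,k,m) for any 0 < δ ≤ min(ρ − ε^k, ρ/m − 2ε^{k+1}). -/
open Finset

namespace RemoveMass

/-- Sum of the `t` smallest "epsilon entries". -/
noncomputable def Low (ε : ℝ) (k m t : ℕ) : ℝ := ∑ i ∈ Finset.Ico (m - t) m, ε ^ (k + i)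

/-- Rado-type inequality description. -/
def Good (ρ' ε : ℝ) (k m : ℕ) (y : Fin m → ℝ) : Prop :=
  (∑ i, y i = ρ') ∧
    ∀ S : Finset (Fin m), S ≠ Finset.univ → Low ε k m S.card ≤ ∑ i ∈ S, y i

lemma sum_range_dite {m : ℕ} (f : Fin m → ℝ) :
    ∀ {i : ℕ}, i ≤ m →
    ∑ j ∈ Finset.range i, (if h : j < m then f ⟨j, h⟩ else 0)
      = ∑ j ∈ Finset.univ.filter (fun j : Fin m => (j : ℕ) < i), f j := by
  intro i
  induction i with
  | zero => simp
  | succ i ih =>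
    intro him
    have him' : i < m := him
    have hins : Finset.univ.filter (fun j : Fin m => (j : ℕ) < i + 1)
        = insert (⟨i, him'⟩ : Fin m) (Finset.univ.filter (fun j : Fin m => (j : ℕ) < i)) := by
      ext j
      simp only [Finset.mem_filter, Finset.mem_univ, true_and, Finset.mem_insert, Fin.ext_iff]
      omega
    rw [Finset.sum_range_succ, ih (le_of_lt him'), dif_pos him', hins,
      Finset.sum_insert (by simp)]
    ring

lemma card_filter_lt {m : ℕ} : ∀ {i : ℕ}, i ≤ m →
    (Finset.univ.filter (fun j : Fin m => (j : ℕ) < i)).card = i := by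
  intro i
  induction i with
  | zero => simp
  | succ i ih =>
    intro him
    have him' : i < m := him
    have hins : Finset.univ.filter (fun j : Fin m => (j : ℕ) < i + 1)
        = insert (⟨i, him'⟩ : Fin m) (Finset.univ.filter (fun j : Fin m => (j : ℕ) < i)) := by
      ext j
      simp only [Finset.mem_filter, Finset.mem_univ, true_and, Finset.mem_insert, Fin.ext_iff]
      omega
    rw [hins, Finset.card_insert_of_notMem (by simp), ih (le_of_lt him')]

lemma geom_le {ε : ℝ} (hε0 : 0 < ε) (hε : ε ≤ 1 / 2) (a n : ℕ) :
    ∑ j ∈ Finset.range n, ε ^ (a + j) ≤ 2 * ε ^ a := by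
  have h1 : ∑ j ∈ Finset.range n, ε ^ (a + j) = ε ^ a * ∑ j ∈ Finset.range n, ε ^ j := by
    rw [Finset.mul_sum]
    exact Finset.sum_congr rfl fun j _ => pow_add ε a j
  have h2 : (∑ j ∈ Finset.range n, ε ^ j) * (ε - 1) = ε ^ n - 1 := geom_sum_mul ε n
  have h3 : (0:ℝ) ≤ ε ^ n := pow_nonneg hε0.le n
  have h4 : (0:ℝ) ≤ ∑ j ∈ Finset.range n, ε ^ j :=
    Finset.sum_nonneg fun j _ => pow_nonneg hε0.le j
  have h5 : ∑ j ∈ Finset.range n, ε ^ j ≤ 2 := by nlinarith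
  have h6 : (0:ℝ) ≤ ε ^ a := pow_nonneg hε0.le a
  calc ∑ j ∈ Finset.range n, ε ^ (a + j) = ε ^ a * ∑ j ∈ Finset.range n, ε ^ j := h1
    _ ≤ ε ^ a * 2 := by nlinarith
    _ = 2 * ε ^ a := by ring

lemma Low_succ {m : ℕ} (ε : ℝ) (k : ℕ) {t : ℕ} (h1 : 1 ≤ t) (h2 : t ≤ m) :
    Low ε k m t = ε ^ (k + (m - t)) + Low ε k m (t - 1) := by
  unfold Low
  have h : m - t < m := by omega
  have h' : m - t + 1 = m - (t - 1) := by omega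
  rw [← Finset.insert_Ico_add_one_left_eq_Ico h, Finset.sum_insert (by simp), h']

lemma low_le_sum_pow {m : ℕ} {ε : ℝ} (hε0 : 0 ≤ ε) (hε1 : ε ≤ 1) (k : ℕ) :
    ∀ (t : ℕ) (A : Finset (Fin m)), A.card = t → (∀ a ∈ A, 1 ≤ (a : ℕ)) →
      Low ε k m t ≤ ∑ a ∈ A, ε ^ (k + (a : ℕ)) := by
  intro t
  induction t with
  | zero =>
    intro A hA _
    rw [Finset.card_eq_zero] at hA
    subst hA
    simp [Low]
  | succ t ih =>
    intro A hA hA1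
    have hne : A.Nonempty := Finset.card_pos.mp (by omega)
    set a0 := A.min' hne with ha0
    have hmem : a0 ∈ A := A.min'_mem hne
    -- card bound: a0.val ≤ m - (t+1)
    have hsub : A ⊆ Finset.univ.filter (fun j : Fin m => ¬ ((j : ℕ) < (a0 : ℕ))) := by
      intro a ha
      simp only [Finset.mem_filter, Finset.mem_univ, true_and, not_lt]
      exact A.min'_le a ha
    have hcard2 : (Finset.univ.filter (fun j : Fin m => ¬ ((j : ℕ) < (a0 : ℕ)))).card
        = m - (a0 : ℕ) := by
      have := Finset.card_filter_add_card_filter_not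
        (s := (Finset.univ : Finset (Fin m))) (p := fun j : Fin m => (j : ℕ) < (a0 : ℕ))
      have h1 : (Finset.univ.filter (fun j : Fin m => (j : ℕ) < (a0 : ℕ))).card = (a0 : ℕ) :=
        card_filter_lt (le_of_lt a0.isLt)
      simp only [Finset.card_univ, Fintype.card_fin] at this
      omega
    have hble : t + 1 ≤ m - (a0 : ℕ) := by
      rw [← hA, ← hcard2]; exact Finset.card_le_card hsub
    have ha0le : (a0 : ℕ) ≤ m - (t + 1) := by
      have := a0.isLt; omega
    have hm1 : t + 1 ≤ m := by have := a0.isLt; omega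
    have hIH := ih (A.erase a0) (by rw [Finset.card_erase_of_mem hmem, hA]; omega)
      (fun a ha => hA1 a (Finset.mem_of_mem_erase ha))
    have hpow : ε ^ (k + (m - (t + 1))) ≤ ε ^ (k + (a0 : ℕ)) :=
      pow_le_pow_of_le_one hε0 hε1 (by omega)
    rw [Low_succ ε k (by omega) hm1]
    have hsum : ε ^ (k + (a0 : ℕ)) + ∑ a ∈ A.erase a0, ε ^ (k + (a : ℕ))
        = ∑ a ∈ A, ε ^ (k + (a : ℕ)) := Finset.add_sum_erase A (fun a => ε ^ (k + (a : ℕ))) hmem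
    simp only [Nat.add_sub_cancel]
    linarith

lemma sum_pEps (ρ' ε : ℝ) (k : ℕ) {m : ℕ} (hm : 0 < m) :
    ∑ i, pEps ρ' ε k m i = ρ' := by
  obtain ⟨m', rfl⟩ : ∃ m', m = m' + 1 := ⟨m - 1, by omega⟩
  rw [Fin.sum_univ_succ]
  have h0 : pEps ρ' ε k (m' + 1) 0 = ρ' - ∑ j ∈ Finset.range m', ε ^ (k + 1 + j) := by
    simp [pEps]
  have hs : ∀ i : Fin m', pEps ρ' ε k (m' + 1) i.succ = ε ^ (k + 1 + (i : ℕ)) := by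
    intro i
    have : (i.succ : ℕ) = (i : ℕ) + 1 := rfl
    simp only [pEps, this]
    rw [if_neg (by omega)]
    congr 1
    omega
  rw [h0, Finset.sum_congr rfl (fun i _ => hs i),
    Fin.sum_univ_eq_sum_range (fun j => ε ^ (k + 1 + j)) m']
  ring

lemma low_le_sum_pEps {m : ℕ} {ε : ℝ} (hε0 : 0 < ε) (hε1 : ε ≤ 1) (k : ℕ) {ρ' : ℝ}
    (hρ' : ε ^ (k + 1) + ∑ j ∈ Finset.range (m - 1), ε ^ (k + 1 + j) ≤ ρ')
    (A : Finset (Fin m)) (hA : A ≠ Finset.univ) :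
    Low ε k m A.card ≤ ∑ a ∈ A, pEps ρ' ε k m a := by
  have hcard : A.card < m := by
    have h := Finset.card_lt_card (Finset.ssubset_univ_iff.mpr hA)
    simpa using h
  by_cases h0 : ∀ a ∈ A, 1 ≤ (a : ℕ)
  · have : ∑ a ∈ A, pEps ρ' ε k m a = ∑ a ∈ A, ε ^ (k + (a : ℕ)) := by
      refine Finset.sum_congr rfl fun a ha => ?_
      simp only [pEps]
      rw [if_neg (by have := h0 a ha; omega)]
    rw [this]
    exact low_le_sum_pow hε0.le hε1 k A.card A rfl h0
  · push_neg at h0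
    obtain ⟨a0, ha0A, ha0⟩ := h0
    have ha0v : (a0 : ℕ) = 0 := by omega
    have herase : ∀ a ∈ A.erase a0, 1 ≤ (a : ℕ) := by
      intro a ha
      have hne := Finset.ne_of_mem_erase ha
      have : (a : ℕ) ≠ 0 := fun h => hne (Fin.ext (by rw [h, ha0v]))
      omega
    have hs1 : 1 ≤ A.card := Finset.card_pos.mpr ⟨a0, ha0A⟩
    have hIH := low_le_sum_pow hε0.le hε1 k (A.card - 1) (A.erase a0)
      (Finset.card_erase_of_mem ha0A) herase
    have hval : pEps ρ' ε k m a0 = ρ' - ∑ j ∈ Finset.range (m - 1), ε ^ (k + 1 + j) := by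
      simp [pEps, ha0v]
    have hbig : ε ^ (k + (m - A.card)) ≤ pEps ρ' ε k m a0 := by
      rw [hval]
      have h1 : ε ^ (k + (m - A.card)) ≤ ε ^ (k + 1) :=
        pow_le_pow_of_le_one hε0.le hε1 (by omega)
      linarith
    have herase_eq : ∑ a ∈ A.erase a0, pEps ρ' ε k m a
        = ∑ a ∈ A.erase a0, ε ^ (k + (a : ℕ)) := by
      refine Finset.sum_congr rfl fun a ha => ?_
      simp only [pEps]
      rw [if_neg (by have := herase a ha; omega)]
    have hsum : pEps ρ' ε k m a0 + ∑ a ∈ A.erase a0, pEps ρ' ε k m a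
        = ∑ a ∈ A, pEps ρ' ε k m a := Finset.add_sum_erase A (fun a => pEps ρ' ε k m a) ha0A
    rw [Low_succ ε k hs1 (le_of_lt hcard)]
    rw [herase_eq] at hsum
    linarith

lemma abel_compare (m : ℕ) (A u w : ℕ → ℝ)
    (hA : ∀ i, i + 1 < m → A i ≤ A (i + 1))
    (hH : ∀ i, i ≤ m → ∑ j ∈ Finset.range i, w j ≤ ∑ j ∈ Finset.range i, u j)
    (hEq : ∑ j ∈ Finset.range m, u j = ∑ j ∈ Finset.range m, w j) :
    ∑ i ∈ Finset.range m, A i * u i ≤ ∑ i ∈ Finset.range m, A i * w i := by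
  have hG : ∑ j ∈ Finset.range m, (u j - w j) = 0 := by
    rw [Finset.sum_sub_distrib, hEq]; ring
  have hterm : ∀ i ∈ Finset.range (m - 1),
      0 ≤ (A (i + 1) - A i) * ∑ j ∈ Finset.range (i + 1), (u j - w j) := by
    intro i hi
    rw [Finset.mem_range] at hi
    have h1 : A i ≤ A (i + 1) := hA i (by omega)
    have h2 : 0 ≤ ∑ j ∈ Finset.range (i + 1), (u j - w j) := by
      rw [Finset.sum_sub_distrib]
      have := hH (i + 1) (by omega)
      linarith
    exact mul_nonneg (by linarith) h2
  have key := Finset.sum_range_by_parts A (fun j => u j - w j) m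
  simp only [smul_eq_mul] at key
  rw [hG, mul_zero, zero_sub] at key
  have hle : ∑ i ∈ Finset.range m, A i * (u i - w i) ≤ 0 := by
    rw [key]
    have := Finset.sum_nonneg hterm
    linarith
  have expand : ∑ i ∈ Finset.range m, A i * (u i - w i)
      = ∑ i ∈ Finset.range m, A i * u i - ∑ i ∈ Finset.range m, A i * w i := by
    rw [← Finset.sum_sub_distrib]
    exact Finset.sum_congr rfl fun i _ => by ring
  rw [expand] at hle
  linarith

lemma good_of_mem {m : ℕ} (hm : 0 < m) {ρ' ε : ℝ} (hε0 : 0 < ε) (hε1 : ε ≤ 1) (k : ℕ)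
    (hρ' : ε ^ (k + 1) + ∑ j ∈ Finset.range (m - 1), ε ^ (k + 1 + j) ≤ ρ')
    {x : Fin m → ℝ} (hx : x ∈ PiEps ρ' ε k m) : Good ρ' ε k m x := by
  have hconv : Convex ℝ {y : Fin m → ℝ | Good ρ' ε k m y} := by
    intro y hy z hz av bv ha hb hab
    constructor
    · have h1 : ∑ i, (av • y + bv • z) i = av * ∑ i, y i + bv * ∑ i, z i := by
        simp only [Pi.add_apply, Pi.smul_apply, smul_eq_mul]
        rw [Finset.sum_add_distrib, Finset.mul_sum, Finset.mul_sum]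
      rw [h1, hy.1, hz.1, ← add_mul, hab, one_mul]
    · intro S hS
      have h1 := hy.2 S hS
      have h2 := hz.2 S hS
      have h3 : ∑ i ∈ S, (av • y + bv • z) i = av * ∑ i ∈ S, y i + bv * ∑ i ∈ S, z i := by
        simp only [Pi.add_apply, Pi.smul_apply, smul_eq_mul]
        rw [Finset.sum_add_distrib, Finset.mul_sum, Finset.mul_sum]
      rw [h3]
      have h4 : av * Low ε k m S.card + bv * Low ε k m S.card = Low ε k m S.card := by
        rw [← add_mul, hab, one_mul]
      nlinarith [mul_le_mul_of_nonneg_left h1 ha, mul_le_mul_of_nonneg_left h2 hb]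
  refine convexHull_min ?_ hconv hx
  rintro v ⟨π, rfl⟩
  constructor
  · have h1 : ∑ i, (pEps ρ' ε k m ∘ π) i = ∑ i, pEps ρ' ε k m i := Equiv.sum_comp π _
    rw [h1]
    exact sum_pEps ρ' ε k hm
  · intro S hS
    have himg : ∑ i ∈ S, (pEps ρ' ε k m ∘ π) i = ∑ a ∈ S.image π, pEps ρ' ε k m a := by
      rw [Finset.sum_image (fun a _ b _ h => π.injective h)]
      rfl
    rw [himg]
    have hcard : (S.image π).card = S.card := Finset.card_image_of_injective S π.injective
    have hne : S.image π ≠ Finset.univ := by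
      intro h
      have h2 := hcard
      rw [h] at h2
      simp only [Finset.card_univ, Fintype.card_fin] at h2
      have hlt := Finset.card_lt_card (Finset.ssubset_univ_iff.mpr hS)
      simp only [Finset.card_univ, Fintype.card_fin] at hlt
      omega
    have := low_le_sum_pEps hε0 hε1 k hρ' (S.image π) hne
    rw [hcard] at this
    exact this

lemma mem_of_good {m : ℕ} (hm : 0 < m) {ε : ℝ} (k : ℕ) {ρ' : ℝ} {y : Fin m → ℝ}
    (hy : Good ρ' ε k m y) : y ∈ PiEps ρ' ε k m := by
  by_contra hmem
  set p := pEps ρ' ε k m with hp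
  have hVfin : ({x : Fin m → ℝ | ∃ π : Equiv.Perm (Fin m), x = p ∘ π}).Finite := by
    have hset : {x : Fin m → ℝ | ∃ π : Equiv.Perm (Fin m), x = p ∘ π}
        = Set.range (fun π : Equiv.Perm (Fin m) => p ∘ π) := by
      ext v
      simp only [Set.mem_setOf_eq, Set.mem_range]
      exact exists_congr fun π => eq_comm
    rw [hset]
    exact Set.finite_range _
  have hclosed : IsClosed (PiEps ρ' ε k m) := hVfin.isClosed_convexHull ℝ
  have hconv : Convex ℝ (PiEps ρ' ε k m) := convex_convexHull ℝ _
  obtain ⟨f, u, hfu, hufy⟩ := geometric_hahn_banach_closed_point hconv hclosed hmem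
  set a : Fin m → ℝ := fun i => f (Pi.single i 1) with ha
  have flin : ∀ z : Fin m → ℝ, f z = ∑ i, a i * z i := by
    intro z
    have hz : z = ∑ i, z i • (Pi.single i (1 : ℝ) : Fin m → ℝ) := by
      funext j
      rw [Finset.sum_apply]
      simp [Pi.single_apply, mul_ite]
    calc f z = f (∑ i, z i • (Pi.single i (1 : ℝ) : Fin m → ℝ)) := by rw [← hz]
      _ = ∑ i, f (z i • (Pi.single i (1 : ℝ) : Fin m → ℝ)) := map_sum f _ _
      _ = ∑ i, a i * z i := by
          refine Finset.sum_congr rfl fun i _ => ?_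
          rw [f.map_smul]
          simp only [ha, smul_eq_mul]
          ring
  set g := Tuple.sort a with hg
  set AA : ℕ → ℝ := fun i => if h : i < m then a (g ⟨i, h⟩) else 0 with hAA
  set uu : ℕ → ℝ := fun i => if h : i < m then y (g ⟨i, h⟩) else 0 with huu
  set ww : ℕ → ℝ := fun i => if h : i < m then p (Fin.rev ⟨i, h⟩) else 0 with hww
  -- monotonicity
  have hA_mono : ∀ i, i + 1 < m → AA i ≤ AA (i + 1) := by
    intro i hi
    have h1 : i < m := by omega
    simp only [hAA]
    rw [dif_pos h1, dif_pos hi]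
    exact Tuple.monotone_sort a (show (⟨i, h1⟩ : Fin m) ≤ ⟨i + 1, hi⟩ by
      simp [Fin.le_def])
  -- head sums of uu
  have hu_head : ∀ i, i ≤ m → ∑ j ∈ Finset.range i, uu j
      = ∑ v ∈ (Finset.univ.filter (fun j : Fin m => (j : ℕ) < i)).image g, y v := by
    intro i him
    rw [Finset.sum_image (fun x _ x' _ h => g.injective h)]
    exact sum_range_dite (fun j => y (g j)) him
  have hu_low : ∀ i, i < m → Low ε k m i ≤ ∑ j ∈ Finset.range i, uu j := by
    intro i him
    rw [hu_head i him.le]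
    have hcard : ((Finset.univ.filter (fun j : Fin m => (j : ℕ) < i)).image g).card = i := by
      rw [Finset.card_image_of_injective _ g.injective, card_filter_lt him.le]
    have hne : (Finset.univ.filter (fun j : Fin m => (j : ℕ) < i)).image g ≠ Finset.univ := by
      intro h
      rw [h] at hcard
      simp only [Finset.card_univ, Fintype.card_fin] at hcard
      omega
    have := hy.2 _ hne
    rwa [hcard] at this
  -- head sums of ww
  have hw_head : ∀ i, i < m → ∑ j ∈ Finset.range i, ww j = Low ε k m i := by
    intro i him
    have h1 : ∀ j ∈ Finset.range i, ww j = ε ^ (k + (m - 1 - j)) := by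
      intro j hj
      rw [Finset.mem_range] at hj
      have hjm : j < m := by omega
      simp only [hww]
      rw [dif_pos hjm, hp]
      simp only [pEps]
      have hval : ((Fin.rev (⟨j, hjm⟩ : Fin m)) : ℕ) = m - 1 - j := by
        have hjv : ((⟨j, hjm⟩ : Fin m) : ℕ) = j := rfl
        rw [Fin.val_rev, hjv]; omega
      rw [hval, if_neg (by omega)]
    rw [Finset.sum_congr rfl h1]
    have h2 : ∑ j ∈ Finset.range i, ε ^ (k + (m - 1 - j))
        = ∑ j ∈ Finset.range i, ε ^ (k + (m - i + j)) := by
      rw [← Finset.sum_range_reflect (fun j => ε ^ (k + (m - i + j))) i]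
      refine Finset.sum_congr rfl fun j hj => ?_
      rw [Finset.mem_range] at hj
      congr 1
      omega
    rw [h2]
    unfold Low
    rw [Finset.sum_Ico_eq_sum_range]
    have hmi : m - (m - i) = i := by omega
    rw [hmi]
  have huniv : Finset.univ.filter (fun j : Fin m => (j : ℕ) < m) = Finset.univ :=
    Finset.filter_true_of_mem (fun j _ => j.isLt)
  have hu_total : ∑ j ∈ Finset.range m, uu j = ρ' := by
    rw [hu_head m le_rfl, huniv]
    have : ∑ v ∈ Finset.univ.image g, y v = ∑ v, y v := by
      congr 1
      exact Finset.image_univ_equiv g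
    rw [this]
    exact hy.1
  have hw_total : ∑ j ∈ Finset.range m, ww j = ρ' := by
    have h1 : ∑ j ∈ Finset.range m, ww j
        = ∑ j ∈ Finset.univ.filter (fun j : Fin m => (j : ℕ) < m), p (Fin.rev j) :=
      sum_range_dite (fun j => p (Fin.rev j)) le_rfl
    rw [h1, huniv]
    have h2 : ∑ j : Fin m, p (Fin.rev j) = ∑ j, p j := Equiv.sum_comp Fin.revPerm p
    rw [h2, hp]
    exact sum_pEps ρ' ε k hm
  have hH : ∀ i, i ≤ m → ∑ j ∈ Finset.range i, ww j ≤ ∑ j ∈ Finset.range i, uu j := by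
    intro i him
    rcases eq_or_lt_of_le him with rfl | hlt
    · rw [hu_total, hw_total]
    · rw [hw_head i hlt]
      exact hu_low i hlt
  have habel := abel_compare m AA uu ww hA_mono hH (by rw [hu_total, hw_total])
  -- identify the two sides
  set π : Equiv.Perm (Fin m) := g.symm.trans Fin.revPerm with hπ
  have hfy : f y = ∑ i ∈ Finset.range m, AA i * uu i := by
    rw [flin y, ← Equiv.sum_comp g (fun i => a i * y i),
      ← Fin.sum_univ_eq_sum_range (fun j => AA j * uu j) m]
    refine Finset.sum_congr rfl fun i _ => ?_
    simp only [hAA, huu]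
    rw [dif_pos i.isLt, dif_pos i.isLt]
  have hfv : f (p ∘ π) = ∑ i ∈ Finset.range m, AA i * ww i := by
    rw [flin (p ∘ π), ← Equiv.sum_comp g (fun i => a i * (p ∘ π) i),
      ← Fin.sum_univ_eq_sum_range (fun j => AA j * ww j) m]
    refine Finset.sum_congr rfl fun i _ => ?_
    simp only [hAA, hww]
    rw [dif_pos i.isLt, dif_pos i.isLt]
    have : (p ∘ π) (g i) = p (Fin.rev i) := by
      simp only [Function.comp_apply, hπ, Equiv.trans_apply, Equiv.symm_apply_apply]
      rfl
    rw [this]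
  have hvmem : p ∘ π ∈ PiEps ρ' ε k m := subset_convexHull ℝ _ ⟨π, rfl⟩
  have hlt := hfu _ hvmem
  rw [hfv] at hlt
  rw [hfy] at hufy
  linarith

lemma main_helper : True := trivial

end RemoveMass

/-- If `x ∈ Π_ε(ρ,k,m)` with `0 < ε ≤ 1/2` and `ρ > max(ε^k, 2m·ε^{k+1})`,
and `c` is a coordinate of maximal value, then `x − δ·e_c ∈ Π_ε(ρ−δ,k,m)`
for any `0 < δ ≤ min(ρ − ε^k, ρ/m − 2ε^{k+1})`. -/
theorem remove_mass_PiEps (ρ ε : ℝ) (k m : ℕ)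
    (hε0 : 0 < ε) (hε : ε ≤ 1 / 2)
    (hρ : ρ > max (ε ^ k) (2 * m * ε ^ (k + 1)))
    (x : Fin m → ℝ) (hx : x ∈ PiEps ρ ε k m)
    (c : Fin m) (hc : ∀ c' : Fin m, x c' ≤ x c)
    (δ : ℝ) (hδ0 : 0 < δ) (hδ : δ ≤ min (ρ - ε ^ k) (ρ / m - 2 * ε ^ (k + 1))) :
    (fun j => x j - δ * (Pi.single c 1 : Fin m → ℝ) j) ∈ PiEps (ρ - δ) ε k m := by
  have hm : 0 < m := c.pos
  have hε1 : ε ≤ 1 := by linarith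
  have hρ1 : ε ^ k < ρ := lt_of_le_of_lt (le_max_left _ _) hρ
  have hρ2 : 2 * m * ε ^ (k + 1) < ρ := lt_of_le_of_lt (le_max_right _ _) hρ
  have hδ1 : δ ≤ ρ - ε ^ k := le_trans hδ (min_le_left _ _)
  have hδ2 : δ ≤ ρ / m - 2 * ε ^ (k + 1) := le_trans hδ (min_le_right _ _)
  have hpow1 : (0 : ℝ) < ε ^ (k + 1) := pow_pos hε0 _
  have hgeo : ∑ j ∈ Finset.range (m - 1), ε ^ (k + 1 + j) ≤ 2 * ε ^ (k + 1) :=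
    RemoveMass.geom_le hε0 hε (k + 1) (m - 1)
  have hρ'ρ : ε ^ (k + 1) + ∑ j ∈ Finset.range (m - 1), ε ^ (k + 1 + j) ≤ ρ := by
    rcases Nat.lt_or_ge m 2 with h2 | h2
    · have hm1 : m = 1 := by omega
      subst hm1
      simp only [Nat.sub_self, Finset.range_zero, Finset.sum_empty, add_zero]
      have h3 : ε ^ (k + 1) ≤ ε ^ k := pow_le_pow_of_le_one hε0.le hε1 (by omega)
      linarith
    · have hcast : (4 : ℝ) ≤ 2 * m := by
        have h3 : (2 : ℝ) ≤ (m : ℝ) := by exact_mod_cast h2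
        linarith
      nlinarith
  have hgoodx := RemoveMass.good_of_mem hm hε0 hε1 k hρ'ρ hx
  have hxc : ρ / m ≤ x c := by
    have hsum : ∑ i, x i = ρ := hgoodx.1
    have hle : ρ ≤ m * x c := by
      rw [← hsum]
      calc ∑ i, x i ≤ ∑ _i : Fin m, x c := Finset.sum_le_sum fun i _ => hc i
        _ = m * x c := by
            rw [Finset.sum_const, Finset.card_univ, Fintype.card_fin, nsmul_eq_mul]
    rw [div_le_iff₀ (by exact_mod_cast hm : (0:ℝ) < (m:ℝ))]
    nlinarith
  have hgoody : RemoveMass.Good (ρ - δ) ε k m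
      (fun j => x j - δ * (Pi.single c 1 : Fin m → ℝ) j) := by
    constructor
    · have h1 : ∑ j, (Pi.single c (1:ℝ) : Fin m → ℝ) j = 1 := Fintype.sum_pi_single' c 1
      have h2 : ∑ j, (x j - δ * (Pi.single c 1 : Fin m → ℝ) j)
          = ∑ j, x j - δ * ∑ j, (Pi.single c (1:ℝ) : Fin m → ℝ) j := by
        rw [Finset.mul_sum, ← Finset.sum_sub_distrib]
      rw [h2, hgoodx.1, h1, mul_one]
    · intro S hS
      have hsm : S.card < m := by
        have h := Finset.card_lt_card (Finset.ssubset_univ_iff.mpr hS)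
        simpa using h
      by_cases hcS : c ∈ S
      · have h1 : ∑ j ∈ S, (Pi.single c (1:ℝ) : Fin m → ℝ) j = 1 := by
          rw [Finset.sum_congr rfl fun j _ => Pi.single_apply c (1:ℝ) j,
            Finset.sum_ite_eq' S c fun _ => (1:ℝ), if_pos hcS]
        have hsy : ∑ j ∈ S, (x j - δ * (Pi.single c 1 : Fin m → ℝ) j)
            = ∑ j ∈ S, x j - δ := by
          rw [show (fun j => x j - δ * (Pi.single c 1 : Fin m → ℝ) j) = fun j => x j - δ * (Pi.single c 1 : Fin m → ℝ) j from rfl]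
          rw [Finset.sum_sub_distrib, ← Finset.mul_sum, h1, mul_one]
        have hs1 : 1 ≤ S.card := Finset.card_pos.mpr ⟨c, hcS⟩
        have hne : S.erase c ≠ Finset.univ := by
          intro h
          have h2 : c ∉ S.erase c := Finset.notMem_erase c S
          rw [h] at h2
          exact h2 (Finset.mem_univ c)
        have herase := hgoodx.2 (S.erase c) hne
        rw [Finset.card_erase_of_mem hcS] at herase
        have hsplit : x c + ∑ j ∈ S.erase c, x j = ∑ j ∈ S, x j :=
          Finset.add_sum_erase S x hcS
        have hLow := RemoveMass.Low_succ ε k hs1 hsm.le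
        have hpe : ε ^ (k + (m - S.card)) ≤ ε ^ (k + 1) :=
          pow_le_pow_of_le_one hε0.le hε1 (by omega)
        rw [hsy, hLow]
        linarith
      · have hsy : ∑ j ∈ S, (x j - δ * (Pi.single c 1 : Fin m → ℝ) j) = ∑ j ∈ S, x j := by
          refine Finset.sum_congr rfl fun j hj => ?_
          have hjc : j ≠ c := fun h => hcS (h ▸ hj)
          rw [Pi.single_apply, if_neg hjc, mul_zero, sub_zero]
        rw [hsy]
        exact hgoodx.2 S hS
  exact RemoveMass.mem_of_good hm k hgoody
end

section
/- Let δ > 0, ε > 0, m ≥ 1, v ∈ ℝ^m, and define P(x)_c = min_{c'} deltasel_δ(x_c, ε·x_{c'}, v_{c'} − v_c) for x ∈ ℝ₊^m, where deltasel_δ(x,y,z) equals x if z ≤ 0, (1−z/δ)x + (z/δ)y if 0 ≤ z ≤ δ, and y if z ≥ δ. If x ∈ ℝ₊^m is a fixed point of P, then for all coordinates c, c' with v_c + δ ≤ v_{c'}, it holds that x_c ≤ ε·x_{c'}. -/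
/-- The δ-approximate selection function. -/
noncomputable def deltasel (δ x y z : ℝ) : ℝ :=
  if z ≤ 0 then x
  else if z ≤ δ then (1 - z / δ) * x + (z / δ) * y
  else y

/-- A fixed point of the operator
`P(x)_c = min_{c'} deltasel_δ(x_c, ε·x_{c'}, v_{c'} − v_c)` on `ℝ₊^m`
satisfies the δ-almost ε-proper property with respect to `v`. -/
theorem fixed_point_almost_proper (m : ℕ) (hm : 0 < m)
    (δ ε : ℝ) (hδ : 0 < δ) (hε : 0 < ε) (v : Fin m → ℝ)
    (P : (Fin m → ℝ) → Fin m → ℝ)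
    (hP : ∀ (x : Fin m → ℝ) (c : Fin m),
      P x c = Finset.univ.inf'
        (Finset.univ_nonempty_iff.mpr (Fin.pos_iff_nonempty.mp hm))
        (fun c' => deltasel δ (x c) (ε * x c') (v c' - v c)))
    (x : Fin m → ℝ) (hx : ∀ c, 0 ≤ x c) (hfix : P x = x) :
    ∀ c c' : Fin m, v c + δ ≤ v c' → x c ≤ ε * x c' := by
  intro c c' h
  have hz : δ ≤ v c' - v c := by linarith
  have hd : deltasel δ (x c) (ε * x c') (v c' - v c) = ε * x c' := by
    unfold deltasel
    rcases le_or_gt (v c' - v c) δ with hle | hgt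
    · have hz0 : ¬ (v c' - v c ≤ 0) := by linarith
      have : v c' - v c = δ := le_antisymm hle hz
      rw [if_neg hz0, if_pos hle, this, div_self hδ.ne']
      ring
    · rw [if_neg (by linarith), if_neg (by linarith)]
  have := hP x c
  rw [hfix] at this
  calc x c = _ := this
    _ ≤ deltasel δ (x c) (ε * x c') (v c' - v c) :=
        Finset.inf'_le _ (Finset.mem_univ c')
    _ = ε * x c' := hd
end

section
/- Fix a continuous family of valuation functions K_c : X → ℝ (c ranging over a finite index set C) on a compact metric space X of fully mixed behavior strategy profiles, and fix ε > 0, γ > 0. Suppose for every n ∈ ℕ there exists x_n ∈ X such that (x_n)_c ≤ ε·(x_n)_{c'} whenever K_c(x_n) + 1/n ≤ K_{c'}(x_n), but no point y ∈ X with y_c ≤ ε·y_{c'} whenever K_c(y) < K_{c'}(y) lies within ℓ∞-distance γ of x_n. Then a contradiction follows; i.e., for every ε > 0 and γ > 0 there exists δ > 0 such that every δ-relaxed point is within ℓ∞-distance γ of an exact point. -/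
/-- Almost-implies-near: on a compact set `X ⊆ ℝ^C` of (fully mixed) strategy
profiles with continuous valuations `K_c`, for every `ε > 0` and `γ > 0` there
is a `δ > 0` such that every `δ`-almost `ε`-quasi-proper point of `X` lies
within ℓ∞-distance `γ` of an exact `ε`-quasi-proper point of `X`. -/
theorem almost_implies_near (C : Type*) [Fintype C]
    (X : Set (C → ℝ)) (hX : IsCompact X)
    (K : C → (C → ℝ) → ℝ) (hK : ∀ c, ContinuousOn (K c) X)
    (ε γ : ℝ) (hε : 0 < ε) (hγ : 0 < γ) :
    ∃ δ : ℝ, 0 < δ ∧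
      ∀ x ∈ X, (∀ c c' : C, K c x + δ ≤ K c' x → x c ≤ ε * x c') →
        ∃ y ∈ X, (∀ c c' : C, K c y < K c' y → y c ≤ ε * y c') ∧
          ∀ c : C, |x c - y c| ≤ γ := by
  by_contra h
  push_neg at h
  choose u hu hP hfar using fun n : ℕ => h (1 / (n + 1)) (by positivity)
  obtain ⟨x, hxX, φ, hφ, hlim⟩ := hX.tendsto_subseq hu
  have hlimW : Filter.Tendsto (u ∘ φ) Filter.atTop (nhdsWithin x X) :=
    tendsto_nhdsWithin_of_tendsto_nhds_of_eventually_within _ hlim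
      (Filter.Eventually.of_forall fun n => hu (φ n))
  have hexact : ∀ c c' : C, K c x < K c' x → x c ≤ ε * x c' := by
    intro c c' hcc
    have hd0 : 0 < K c' x - K c x := by linarith
    have h1 : Filter.Tendsto (fun n => K c (u (φ n))) Filter.atTop (nhds (K c x)) :=
      (hK c x hxX).tendsto.comp hlimW
    have h2 : Filter.Tendsto (fun n => K c' (u (φ n))) Filter.atTop (nhds (K c' x)) :=
      (hK c' x hxX).tendsto.comp hlimW
    have h3 : Filter.Tendsto (fun n : ℕ => (1 : ℝ) / (φ n + 1)) Filter.atTop (nhds 0) :=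
      tendsto_one_div_add_atTop_nhds_zero_nat.comp hφ.tendsto_atTop
    have e1 := h1.eventually_lt_const (show K c x < K c x + (K c' x - K c x) / 3 by linarith)
    have e2 := h2.eventually_const_lt (show K c' x - (K c' x - K c x) / 3 < K c' x by linarith)
    have e3 := h3.eventually_lt_const (show (0 : ℝ) < (K c' x - K c x) / 3 by linarith)
    have hev : ∀ᶠ n in Filter.atTop, u (φ n) c ≤ ε * u (φ n) c' := by
      filter_upwards [e1, e2, e3] with n a b cc
      exact hP (φ n) c c' (by linarith)
    have tc : Filter.Tendsto (fun n => u (φ n) c) Filter.atTop (nhds (x c)) :=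
      ((continuous_apply c).tendsto x).comp hlim
    have tc' : Filter.Tendsto (fun n => u (φ n) c') Filter.atTop (nhds (x c')) :=
      ((continuous_apply c').tendsto x).comp hlim
    exact le_of_tendsto_of_tendsto tc (tc'.const_mul ε) hev
  obtain ⟨N, hN⟩ := Metric.tendsto_atTop.mp hlim γ hγ
  have hn : dist (u (φ N)) x < γ := by simpa using hN N le_rfl
  obtain ⟨c, hc⟩ := hfar (φ N) x hxX hexact
  have hle : |u (φ N) c - x c| ≤ dist (u (φ N)) x := by
    rw [← Real.dist_eq]; exact dist_le_pi_dist _ _ c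
  linarith
end

section
/- Let c ∈ {1,...,m} and suppose x ∈ Π_ε(ρ,k,m) is written as a convex combination x = ∑_{π∈S_m} w_π π(p) of the vertices π(p) of the permutahedron of a vector p with strictly decreasing coordinates p₁ > ... > p_m satisfying pᵢ ≥ p_{i+1}/(2ε). If for distinct coordinates c, c' every permutation π with w_π > 0 has π^{-1}(c) > π^{-1}(c'), then x_c ≤ 2ε·x_{c'}. -/
/-- If `x` is a convex combination `∑_π w_π · π(p)` of the vertices of the
permutahedron of a strictly decreasing vector `p` with `pᵢ ≥ p_{i+1}/(2ε)`
(vertex `π(p)` giving coordinate `c` the value `p_{π⁻¹(c)}`), and every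
permutation with positive weight places `c` at a later position than `c'`
(i.e. `π⁻¹(c) > π⁻¹(c')`), then `x_c ≤ 2ε·x_{c'}`. -/
theorem convex_combination_ratio (m : ℕ) (ε : ℝ) (hε : 0 < ε)
    (p : Fin m → ℝ)
    (hdec : ∀ i j : Fin m, i < j → p j < p i)
    (hratio : ∀ i : ℕ, (h : i + 1 < m) →
      p ⟨i, by omega⟩ ≥ p ⟨i + 1, h⟩ / (2 * ε))
    (w : Equiv.Perm (Fin m) → ℝ) (hw : ∀ π, 0 ≤ w π) (hw1 : ∑ π, w π = 1)
    (x : Fin m → ℝ)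
    (hx : x = fun j => ∑ π : Equiv.Perm (Fin m), w π * p (π.symm j))
    (c c' : Fin m) (hcc' : c ≠ c')
    (hpos : ∀ π : Equiv.Perm (Fin m), 0 < w π → π.symm c' < π.symm c) :
    x c ≤ 2 * ε * x c' := by
  have h2ε : (0:ℝ) < 2 * ε := by linarith
  have key : ∀ π : Equiv.Perm (Fin m), 0 < w π →
      p (π.symm c) ≤ 2 * ε * p (π.symm c') := by
    intro π hπ
    have hlt := hpos π hπ
    set i := π.symm c' with hi
    set j := π.symm c with hj
    have hi1 : (i : ℕ) + 1 < m := by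
      have := j.isLt
      have : (i:ℕ) < (j:ℕ) := hlt
      omega
    have h1 : p j ≤ p ⟨(i:ℕ) + 1, hi1⟩ := by
      rcases eq_or_lt_of_le (show (⟨(i:ℕ)+1, hi1⟩ : Fin m) ≤ j from by
        have : (i:ℕ) < (j:ℕ) := hlt
        exact Fin.mk_le_of_le_val (by omega)) with h | h
      · rw [h]
      · exact le_of_lt (hdec _ _ h)
    have h2 : p ⟨(i:ℕ) + 1, hi1⟩ ≤ 2 * ε * p i := by
      have := hratio (i:ℕ) hi1
      rw [ge_iff_le, div_le_iff₀ h2ε] at this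
      simpa [mul_comm] using this
    linarith
  subst hx
  simp only
  rw [Finset.mul_sum]
  apply Finset.sum_le_sum
  intro π _
  rcases eq_or_lt_of_le (hw π) with h | h
  · simp [← h]
  · calc w π * p (π.symm c) ≤ w π * (2 * ε * p (π.symm c')) :=
        mul_le_mul_of_nonneg_left (key π h) (hw π)
      _ = 2 * ε * (w π * p (π.symm c')) := by ring
end
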